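/- Let o be a unit vector in R^D, P a random orthogonal matrix (Haar-distributed), C = {±1/√D}^D, and ⟨ō,o⟩ = max over x∈C of ⟨Px, o⟩ = (1/√D)‖P⁻¹o‖₁. Then E[⟨ō, o⟩] = √(D/π)·2Γ(D/2)/((D-1)·Γ((D-1)/2)). -/

import Mathlib

open MeasureTheory Real

section Helpers
variable {D : ℕ}

lemma exists_li_eq (u v : EuclideanSpace ℝ (Fin D)) (h : ‖u‖ = ‖v‖) :
    ∃ f : EuclideanSpace ℝ (Fin D) ≃ₗᵢ[ℝ] EuclideanSpace ℝ (Fin D), f u = v :=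
  ⟨Submodule.reflection (ℝ ∙ (u - v))ᗮ, Submodule.reflection_sub h⟩

lemma abs_coord_le_norm (x : EuclideanSpace ℝ (Fin D)) (i : Fin D) : |x i| ≤ ‖x‖ := by
  have h := abs_real_inner_le_norm (EuclideanSpace.single i (1:ℝ)) x
  simpa [EuclideanSpace.inner_single_left, EuclideanSpace.norm_single] using h

lemma integrable_G : Integrable (fun g : EuclideanSpace ℝ (Fin D) => ‖g‖ * Real.exp (-‖g‖ ^ 2)) := by
  have h1 : Integrable (fun v : EuclideanSpace ℝ (Fin D) => Real.exp (-(1/2) * ‖v‖ ^ 2)) := by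
    have h := (GaussianFourier.integrable_cexp_neg_mul_sq_norm_add
      (b := ((1:ℂ)/2)) (by norm_num) 0 (0 : EuclideanSpace ℝ (Fin D))).norm
    refine h.congr (Filter.Eventually.of_forall fun v => ?_)
    simp [Complex.norm_exp]
    norm_cast
  refine h1.mono' ?_ (Filter.Eventually.of_forall fun v => ?_)
  · exact (continuous_norm.mul (Real.continuous_exp.comp
      ((continuous_norm.pow 2).neg))).aestronglyMeasurable
  · have hs : ‖v‖ ≤ Real.exp ((1/2) * ‖v‖ ^ 2) := by
      have := Real.add_one_le_exp ((1/2) * ‖v‖ ^ 2)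
      nlinarith [norm_nonneg v, sq_nonneg (‖v‖ - 1)]
    have : ‖v‖ * Real.exp (-‖v‖ ^ 2) ≤ Real.exp ((1/2) * ‖v‖ ^ 2) * Real.exp (-‖v‖ ^ 2) :=
      mul_le_mul_of_nonneg_right hs (Real.exp_nonneg _)
    calc ‖(‖v‖ * Real.exp (-‖v‖ ^ 2))‖ = ‖v‖ * Real.exp (-‖v‖ ^ 2) := by
          rw [norm_of_nonneg (by positivity)]
      _ ≤ Real.exp ((1/2) * ‖v‖ ^ 2) * Real.exp (-‖v‖ ^ 2) := this
      _ = Real.exp (-(1/2) * ‖v‖ ^ 2) := by rw [← Real.exp_add]; ring_nf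

end Helpers

lemma int_Ioi_pow_exp (D : ℕ) (hD : 0 < D) :
    ∫ y in Set.Ioi (0:ℝ), y ^ (D - 1) • (y * Real.exp (-y ^ 2)) =
      (1/2) * Real.Gamma ((D + 1) / 2) := by
  rw [show ((D:ℝ) + 1) / 2 = ((D:ℝ) + 1) / 2 from rfl]
  rw [← integral_rpow_mul_exp_neg_rpow (p := 2) (q := (D:ℝ)) (by norm_num)
    (by exact_mod_cast neg_one_lt_zero.trans_le (Nat.cast_nonneg D))]
  refine setIntegral_congr_fun measurableSet_Ioi (fun y hy => ?_)
  have hy0 : (0:ℝ) < y := hy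
  rw [smul_eq_mul, ← mul_assoc, ← pow_succ, Nat.sub_add_cancel hD]
  rw [← Real.rpow_natCast y D, ← Real.rpow_natCast y 2]
  norm_num

lemma int_abs_exp_sq : ∫ t : ℝ, |t| * Real.exp (-t ^ 2) = 1 := by
  have h : ∀ t : ℝ, |t| * Real.exp (-t ^ 2) = (fun s => s * Real.exp (-s ^ 2)) |t| := by
    intro t; simp [sq_abs]
  simp_rw [h]
  rw [integral_comp_abs (f := fun s => s * Real.exp (-s ^ 2))]
  have : ∫ s in Set.Ioi (0:ℝ), s * Real.exp (-s ^ 2) = (1/2) * Real.Gamma ((1 + 1)/2) := by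
    rw [← integral_rpow_mul_exp_neg_rpow (p := 2) (q := 1) (by norm_num) (by norm_num)]
    refine setIntegral_congr_fun measurableSet_Ioi (fun y hy => ?_)
    have hy0 : (0:ℝ) < y := hy
    rw [← Real.rpow_natCast y 2]
    norm_num [Real.rpow_one]
  rw [this]
  norm_num [Real.Gamma_one]

lemma int_exp_sq : ∫ t : ℝ, Real.exp (-t ^ 2) = Real.sqrt π := by
  have := integral_gaussian 1
  simpa using this

lemma integral_G (D : ℕ) (hD : 0 < D) :
    ∫ g : EuclideanSpace ℝ (Fin D), ‖g‖ * Real.exp (-‖g‖ ^ 2) =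
      D * (Real.sqrt π ^ D / Real.Gamma (D / 2 + 1)) * ((1/2) * Real.Gamma ((D + 1) / 2)) := by
  have : Nonempty (Fin D) := ⟨⟨0, hD⟩⟩
  have hnt : Nontrivial (EuclideanSpace ℝ (Fin D)) := by
    refine ⟨0, EuclideanSpace.single ⟨0, hD⟩ 1, fun h => ?_⟩
    have := congrArg (fun v : EuclideanSpace ℝ (Fin D) => ‖v‖) h
    simp [EuclideanSpace.norm_single] at this
  have h := integral_fun_norm_addHaar (volume : Measure (EuclideanSpace ℝ (Fin D)))
    (fun r : ℝ => r * Real.exp (-r ^ 2))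
  have hdim : Module.finrank ℝ (EuclideanSpace ℝ (Fin D)) = D := by
    simp [finrank_euclideanSpace]
  rw [hdim] at h
  rw [h, int_Ioi_pow_exp D hD]
  have hball : ((volume (Metric.ball (0 : EuclideanSpace ℝ (Fin D)) 1)).toReal) =
      Real.sqrt π ^ D / Real.Gamma (D / 2 + 1) := by
    rw [EuclideanSpace.volume_ball]
    have hpos : (0:ℝ) ≤ Real.sqrt π ^ D / Real.Gamma ((D:ℝ) / 2 + 1) := by
      have := Real.Gamma_pos_of_pos (show (0:ℝ) < (D:ℝ) / 2 + 1 by positivity)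
      positivity
    simp only [Fintype.card_fin]
    simp [ENNReal.toReal_mul, ENNReal.toReal_pow, ENNReal.toReal_ofReal hpos]
  rw [measureReal_def, hball]
  simp [nsmul_eq_mul, smul_eq_mul]
  ring

lemma int_coord_gauss (D : ℕ) (i0 : Fin D) :
    ∫ g : EuclideanSpace ℝ (Fin D), |g i0| * Real.exp (-‖g‖ ^ 2) = Real.sqrt π ^ (D - 1) := by
  classical
  set f : Fin D → ℝ → ℝ := fun i t => if i = i0 then |t| * Real.exp (-t ^ 2) else Real.exp (-t ^ 2)
    with hf
  have key : ∀ y : Fin D → ℝ, ∏ i, f i (y i) = |y i0| * Real.exp (-(∑ i, (y i) ^ 2)) := by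
    intro y
    rw [← Finset.mul_prod_erase Finset.univ (fun i => f i (y i)) (Finset.mem_univ i0)]
    have h1 : f i0 (y i0) = |y i0| * Real.exp (-(y i0) ^ 2) := by simp [hf]
    have h2 : ∏ i ∈ Finset.univ.erase i0, f i (y i) =
        ∏ i ∈ Finset.univ.erase i0, Real.exp (-(y i) ^ 2) := by
      refine Finset.prod_congr rfl fun i hi => ?_
      simp [hf, (Finset.mem_erase.mp hi).1]
    rw [h1, h2]
    have h3 : Real.exp (-(∑ i, (y i) ^ 2)) = ∏ i, Real.exp (-(y i) ^ 2) := by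
      rw [← Real.exp_sum]; simp
    rw [h3, ← Finset.mul_prod_erase Finset.univ (fun i => Real.exp (-(y i) ^ 2))
      (Finset.mem_univ i0)]
    ring
  have hnorm : ∀ g : EuclideanSpace ℝ (Fin D), ‖g‖ ^ 2 = ∑ i, (g i) ^ 2 := by
    intro g
    rw [EuclideanSpace.norm_eq, Real.sq_sqrt (by positivity)]
    simp [sq_abs]
  have vp := EuclideanSpace.volume_preserving_symm_measurableEquiv_toLp (Fin D)
  have h := vp.integral_comp (MeasurableEquiv.measurableEmbedding _)
    (fun y : Fin D → ℝ => ∏ i, f i (y i))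
  have heq : (∫ g : EuclideanSpace ℝ (Fin D),
      (fun y : Fin D → ℝ => ∏ i, f i (y i)) ((MeasurableEquiv.toLp 2 (Fin D → ℝ)).symm g)) =
      ∫ g : EuclideanSpace ℝ (Fin D), |g i0| * Real.exp (-‖g‖ ^ 2) := by
    refine integral_congr_ae (Filter.EventuallyEq.of_eq (funext fun g => ?_))
    simp only [key]
    rw [hnorm]
    rfl
  rw [heq] at h
  rw [h, volume_pi, integral_fintype_prod_eq_prod]
  rw [← Finset.mul_prod_erase Finset.univ (fun i => ∫ t : ℝ, f i t) (Finset.mem_univ i0)]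
  have h1 : (∫ t : ℝ, f i0 t) = 1 := by simp only [hf, if_pos rfl]; exact int_abs_exp_sq
  have h2 : ∏ i ∈ Finset.univ.erase i0, (∫ t : ℝ, f i t) = Real.sqrt π ^ (D - 1) := by
    have : ∀ i ∈ Finset.univ.erase i0, (∫ t : ℝ, f i t) = Real.sqrt π := by
      intro i hi
      simp only [hf, if_neg (Finset.mem_erase.mp hi).1]
      exact int_exp_sq
    rw [Finset.prod_congr rfl this, Finset.prod_const, Finset.card_erase_of_mem
      (Finset.mem_univ i0), Finset.card_univ, Fintype.card_fin]
  rw [h1, h2, one_mul]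

lemma int_inner_gauss (D : ℕ) (hD : 0 < D) (x : EuclideanSpace ℝ (Fin D)) (hx : ‖x‖ = 1) :
    ∫ g : EuclideanSpace ℝ (Fin D), |(inner ℝ x g : ℝ)| * Real.exp (-‖g‖ ^ 2) =
      Real.sqrt π ^ (D - 1) := by
  set i0 : Fin D := ⟨0, hD⟩
  set u : EuclideanSpace ℝ (Fin D) := EuclideanSpace.single i0 (1:ℝ) with hu
  have hnu : ‖u‖ = ‖x‖ := by rw [hx, hu, EuclideanSpace.norm_single]; simp
  obtain ⟨f, hf⟩ := exists_li_eq u x hnu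
  have hmp := (f.measurePreserving).integral_comp f.toHomeomorph.measurableEmbedding
    (fun g : EuclideanSpace ℝ (Fin D) => |(inner ℝ x g : ℝ)| * Real.exp (-‖g‖ ^ 2))
  rw [← hmp]
  have : ∀ g : EuclideanSpace ℝ (Fin D),
      |(inner ℝ x (f g) : ℝ)| * Real.exp (-‖f g‖ ^ 2) = |g i0| * Real.exp (-‖g‖ ^ 2) := by
    intro g
    rw [f.norm_map, ← hf, f.inner_map_map]
    congr 2
    simp [hu, EuclideanSpace.inner_single_left]
  simp only [this]
  exact int_coord_gauss D i0

lemma final_algebra (D : ℕ) (hD : 3 ≤ D) :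
    (1 / Real.sqrt D) * (D * (Real.sqrt π ^ (D - 1) /
        (D * (Real.sqrt π ^ D / Real.Gamma (D / 2 + 1)) * ((1/2) * Real.Gamma ((D + 1) / 2))))) =
      Real.sqrt ((D : ℝ) / Real.pi) * (2 * Real.Gamma (D / 2)) /
        (((D : ℝ) - 1) * Real.Gamma ((D - 1) / 2)) := by
  have hd3 : (3:ℝ) ≤ (D:ℝ) := by exact_mod_cast hD
  have hdpos : (0:ℝ) < D := by linarith
  have hG1 : Real.Gamma ((D:ℝ) / 2 + 1) = ((D:ℝ)/2) * Real.Gamma ((D:ℝ)/2) :=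
    Real.Gamma_add_one (by positivity)
  have hG2 : Real.Gamma (((D:ℝ) + 1) / 2) = (((D:ℝ)-1)/2) * Real.Gamma (((D:ℝ)-1)/2) := by
    rw [show ((D:ℝ) + 1) / 2 = ((D:ℝ)-1)/2 + 1 by ring]
    exact Real.Gamma_add_one (by intro h; nlinarith [h])
  have hpow : Real.sqrt π ^ D = Real.sqrt π ^ (D - 1) * Real.sqrt π := by
    rw [← pow_succ]; congr 1; omega
  have hdnn : (0:ℝ) ≤ (D:ℝ) := le_of_lt (by exact_mod_cast (by omega : 0 < D))
  have hsq : Real.sqrt ((D:ℝ) / π) = Real.sqrt D / Real.sqrt π := Real.sqrt_div hdnn π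
  rw [hG1, hG2, hpow, hsq]
  have ha : (0:ℝ) < Real.Gamma ((D:ℝ)/2) := Real.Gamma_pos_of_pos (by positivity)
  have hb : (0:ℝ) < Real.Gamma (((D:ℝ)-1)/2) := Real.Gamma_pos_of_pos (by nlinarith)
  have hA : (0:ℝ) < Real.sqrt π ^ (D - 1) := by positivity
  have hp : (0:ℝ) < Real.sqrt π := Real.sqrt_pos.mpr Real.pi_pos
  have hs : (0:ℝ) < Real.sqrt D := Real.sqrt_pos.mpr hdpos
  have hss : Real.sqrt D * Real.sqrt D = (D:ℝ) := Real.mul_self_sqrt (le_of_lt hdpos)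
  have hd1 : (D:ℝ) - 1 ≠ 0 := by nlinarith
  field_simp
  linear_combination (-1 : ℝ) * hss

/-- For a Haar-random orthogonal matrix `P` and a unit vector `o`, the vector `P⁻¹ o` is
uniformly distributed on the unit sphere, and `⟨ō, o⟩ = (1/√D)·‖P⁻¹o‖₁`. So the claimed
expectation is the integral of `(1/√D)·‖x‖₁` against the uniform sphere measure `μ`
(characterized as a rotation-invariant probability measure supported on the sphere). -/
theorem expected_inner_quantized (D : ℕ) (hD : 3 ≤ D)
    (μ : Measure (EuclideanSpace ℝ (Fin D))) [IsProbabilityMeasure μ]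
    (hsupp : μ {x | ‖x‖ ≠ 1} = 0)
    (hinv : ∀ f : EuclideanSpace ℝ (Fin D) ≃ₗᵢ[ℝ] EuclideanSpace ℝ (Fin D),
      μ.map f = μ) :
    ∫ x, (1 / Real.sqrt D) * ∑ i, |x i| ∂μ =
      Real.sqrt ((D : ℝ) / Real.pi) * (2 * Real.Gamma (D / 2)) /
        (((D : ℝ) - 1) * Real.Gamma ((D - 1) / 2)) := by
  have hD0 : 0 < D := by omega
  have hae : ∀ᵐ x ∂μ, ‖x‖ = 1 := by
    rw [MeasureTheory.ae_iff]
    exact hsupp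
  -- integrability of coordinates
  have hIntC : ∀ i : Fin D, Integrable (fun x : EuclideanSpace ℝ (Fin D) => |x i|) μ := by
    intro i
    refine ⟨(by fun_prop : Continuous fun x : EuclideanSpace ℝ (Fin D) => |x i|).aestronglyMeasurable, ?_⟩
    refine MeasureTheory.HasFiniteIntegral.of_bounded (C := 1) ?_
    filter_upwards [hae] with x hx
    rw [Real.norm_eq_abs, abs_abs]
    calc |x i| ≤ ‖x‖ := abs_coord_le_norm x i
      _ = 1 := hx
  set Li : Fin D → ℝ := fun i => ∫ x, |x i| ∂μ with hLi
  set N : ℝ := ∫ g : EuclideanSpace ℝ (Fin D), ‖g‖ * Real.exp (-‖g‖ ^ 2) with hN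
  set K : ℝ := Real.sqrt π ^ (D - 1) with hK
  -- rotation invariance of μ
  have claimA : ∀ (i : Fin D) (g : EuclideanSpace ℝ (Fin D)),
      ∫ x, |(inner ℝ x g : ℝ)| ∂μ = ‖g‖ * Li i := by
    intro i g
    by_cases hg : g = 0
    · simp [hg]
    · have hgn : ‖g‖ ≠ 0 := norm_ne_zero_iff.mpr hg
      obtain ⟨f, hf⟩ := exists_li_eq (EuclideanSpace.single i (1:ℝ)) (‖g‖⁻¹ • g)
        (by rw [EuclideanSpace.norm_single, norm_smul, norm_inv, norm_norm,
              inv_mul_cancel₀ hgn]; simp)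
      have happ : f (‖g‖ • EuclideanSpace.single i (1:ℝ)) = g := by
        rw [_root_.map_smul, hf, smul_smul, mul_inv_cancel₀ hgn, one_smul]
      have hsymm : f.symm g = ‖g‖ • EuclideanSpace.single i (1:ℝ) := by
        have h2 := congrArg f.symm happ
        rw [LinearIsometryEquiv.symm_apply_apply] at h2
        exact h2.symm
      have hmeas : AEStronglyMeasurable (fun x : EuclideanSpace ℝ (Fin D) => |(inner ℝ x g : ℝ)|)
          (μ.map f) := ((continuous_id.inner continuous_const).abs).aestronglyMeasurable
      calc ∫ x, |(inner ℝ x g : ℝ)| ∂μ = ∫ x, |(inner ℝ x g : ℝ)| ∂(μ.map f) := by rw [hinv f]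
        _ = ∫ x, |(inner ℝ (f x) g : ℝ)| ∂μ :=
            integral_map f.continuous.aemeasurable hmeas
        _ = ∫ x, ‖g‖ * |x i| ∂μ := by
            refine integral_congr_ae (Filter.Eventually.of_forall fun x => ?_)
            show |(inner ℝ (f x) g : ℝ)| = ‖g‖ * |x i|
            have : (inner ℝ (f x) g : ℝ) = ‖g‖ * x i := by
              conv_lhs => rw [show g = f (f.symm g) from (f.apply_symm_apply g).symm]
              rw [f.inner_map_map, hsymm, real_inner_smul_right]
              simp [EuclideanSpace.inner_single_right]
            rw [this, abs_mul, abs_of_nonneg (norm_nonneg g)]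
        _ = ‖g‖ * Li i := integral_const_mul _ _
  -- Fubini setup
  set F : EuclideanSpace ℝ (Fin D) × EuclideanSpace ℝ (Fin D) → ℝ :=
    fun z => |(inner ℝ z.1 z.2 : ℝ)| * Real.exp (-‖z.2‖ ^ 2) with hF
  have hFcont : Continuous F :=
    ((continuous_fst.inner continuous_snd).abs).mul
      (Real.continuous_exp.comp (continuous_snd.norm.pow 2).neg)
  have hFmeas : AEStronglyMeasurable F (μ.prod volume) := hFcont.aestronglyMeasurable
  have hFslice : ∀ x : EuclideanSpace ℝ (Fin D),
      Integrable (fun g : EuclideanSpace ℝ (Fin D) => F (x, g)) volume := by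
    intro x
    refine (integrable_G.const_mul ‖x‖).mono'
      (hFcont.comp (Continuous.prodMk_right x)).aestronglyMeasurable
      (Filter.Eventually.of_forall fun g => ?_)
    rw [Real.norm_eq_abs, hF]
    simp only
    rw [abs_mul, abs_abs, abs_of_nonneg (Real.exp_nonneg _)]
    have h1 : |(inner ℝ x g : ℝ)| ≤ ‖x‖ * ‖g‖ := abs_real_inner_le_norm x g
    calc |(inner ℝ x g : ℝ)| * Real.exp (-‖g‖ ^ 2)
        ≤ ‖x‖ * ‖g‖ * Real.exp (-‖g‖ ^ 2) :=
          mul_le_mul_of_nonneg_right h1 (Real.exp_nonneg _)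
      _ = ‖x‖ * (‖g‖ * Real.exp (-‖g‖ ^ 2)) := by ring
  have hFint : Integrable F (μ.prod volume) := by
    refine (integrable_prod_iff hFmeas).mpr ⟨?_, ?_⟩
    · exact Filter.Eventually.of_forall hFslice
    · refine ⟨hFmeas.norm.integral_prod_right', ?_⟩
      refine MeasureTheory.HasFiniteIntegral.of_bounded (C := N) ?_
      filter_upwards [hae] with x hx
      have hnn : 0 ≤ ∫ g, ‖F (x, g)‖ := integral_nonneg fun g => norm_nonneg _
      rw [Real.norm_eq_abs, abs_of_nonneg hnn]
      refine integral_mono_of_nonneg (Filter.Eventually.of_forall fun g => norm_nonneg _)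
        integrable_G (Filter.Eventually.of_forall fun g => ?_)
      show ‖F (x, g)‖ ≤ ‖g‖ * Real.exp (-‖g‖ ^ 2)
      rw [Real.norm_eq_abs, hF]
      simp only
      rw [abs_mul, abs_abs, abs_of_nonneg (Real.exp_nonneg _)]
      have h1 : |(inner ℝ x g : ℝ)| ≤ ‖x‖ * ‖g‖ := abs_real_inner_le_norm x g
      rw [hx, one_mul] at h1
      exact mul_le_mul_of_nonneg_right h1 (Real.exp_nonneg _)
  have hswap : ∫ x, (∫ g, F (x, g)) ∂μ = ∫ g, (∫ x, F (x, g) ∂μ) :=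
    integral_integral_swap hFint
  have hleft : ∫ x, (∫ g, F (x, g)) ∂μ = K := by
    have : ∫ x, (∫ g, F (x, g)) ∂μ = ∫ _x, K ∂μ := by
      refine integral_congr_ae ?_
      filter_upwards [hae] with x hx
      exact int_inner_gauss D hD0 x hx
    rw [this, integral_const]
    simp
  have hright : ∀ i : Fin D, ∫ g, (∫ x, F (x, g) ∂μ) = N * Li i := by
    intro i
    have h1 : ∀ g : EuclideanSpace ℝ (Fin D),
        (∫ x, F (x, g) ∂μ) = (‖g‖ * Real.exp (-‖g‖ ^ 2)) * Li i := by
      intro g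
      have : ∫ x, F (x, g) ∂μ = (∫ x, |(inner ℝ x g : ℝ)| ∂μ) * Real.exp (-‖g‖ ^ 2) := by
        simp only [hF]
        exact integral_mul_const _ _
      rw [this, claimA i g]
      ring
    simp_rw [h1]
    rw [integral_mul_const, hN]
  have hLival : ∀ i : Fin D, Li i = K / N := by
    intro i
    have hNpos : 0 < N := by
      rw [hN, integral_G D hD0]
      have h1 := Real.Gamma_pos_of_pos (show (0:ℝ) < D / 2 + 1 by positivity)
      have h2 := Real.Gamma_pos_of_pos (show (0:ℝ) < ((D:ℝ) + 1) / 2 by positivity)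
      have h3 : (0:ℝ) < Real.sqrt π := Real.sqrt_pos.mpr Real.pi_pos
      have h4 : (0:ℝ) < D := by exact_mod_cast hD0
      positivity
    have := (hleft.symm.trans hswap).trans (hright i)
    field_simp [hNpos.ne'] at this ⊢
    linarith [this]
  rw [MeasureTheory.integral_const_mul, integral_finset_sum _ (fun i _ => hIntC i)]
  have : ∀ i ∈ Finset.univ, (∫ x, |x i| ∂μ) = K / N := fun i _ => hLival i
  rw [Finset.sum_congr rfl this, Finset.sum_const, Finset.card_univ, Fintype.card_fin,
    nsmul_eq_mul]
  rw [← final_algebra D hD, hK, hN, integral_G D hD0]
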